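/- Let b_1, ..., b_r be an RKZ-reduced basis of a lattice L (i.e., its reciprocal basis is Korkhine-Zolotarev reduced), with Gram-Schmidt vectors b_1^*, ..., b_r^*. Then ‖b_i^*‖ ≥ λ_1(L)/C_i for each i, where C_i is Hermite's constant of rank i and λ_1(L) is the length of a shortest nonzero lattice vector. -/

import Mathlib

/-- The Gram-Schmidt orthogonalization of a finite family of vectors. -/
noncomputable def gsE {E : Type*} [NormedAddCommGroup E] [InnerProductSpace ℝ E] {r : ℕ}
    (c : Fin r → E) : Fin r → E :=
  haveI : WellFoundedLT (Fin r) := inferInstance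
  InnerProductSpace.gramSchmidt ℝ c

/-- The lattice generated by a family of vectors: all integer combinations. -/
noncomputable def latE {E : Type*} [NormedAddCommGroup E] [InnerProductSpace ℝ E] {r : ℕ}
    (c : Fin r → E) : AddSubgroup E :=
  AddSubgroup.closure (Set.range c)

/-- The length of a shortest nonzero vector of the lattice generated by `c`. -/
noncomputable def lambda1 {E : Type*} [NormedAddCommGroup E] [InnerProductSpace ℝ E] {r : ℕ}
    (c : Fin r → E) : ℝ :=
  sInf { t | ∃ v ∈ latE c, v ≠ 0 ∧ ‖v‖ = t }

/-- The determinant of the lattice with basis `c` : the square root of the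
Gram determinant of `c`. -/
noncomputable def latDet {E : Type*} [NormedAddCommGroup E] [InnerProductSpace ℝ E] {r : ℕ}
    (c : Fin r → E) : ℝ :=
  Real.sqrt (Matrix.det (Matrix.of fun i j : Fin r => (inner ℝ (c i) (c j) : ℝ)))

/-- Hermite's constant of rank `j`. -/
noncomputable def hermiteC (j : ℕ) : ℝ :=
  sSup { t | ∃ c : Fin j → EuclideanSpace ℝ (Fin j), LinearIndependent ℝ c ∧
    t = lambda1 c ^ 2 / latDet c ^ ((2 : ℝ) / j) }

/-- `γ_j = max {C_1, ..., C_j}`. -/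
noncomputable def gammaH (j : ℕ) : ℝ := sSup (hermiteC '' Set.Icc 1 j)

/-- Projection onto the orthogonal complement of the span of a set. -/
noncomputable def projPerp {E : Type*} [NormedAddCommGroup E] [InnerProductSpace ℝ E]
    [FiniteDimensional ℝ E] (S : Set E) (v : E) : E :=
  (Submodule.orthogonalProjectionOnto (Submodule.span ℝ S)ᗮ v : E)

/-- A family `c_0, ..., c_{r-1}` is Korkhine-Zolotarev reduced if for each `i`, the projection
`c_i(i)` of `c_i` onto the orthogonal complement of `span(c_0, ..., c_{i-1})` is a shortest
nonzero vector of the lattice generated by the projections of the `c_j` onto that complement. -/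
def KZReduced {E : Type*} [NormedAddCommGroup E] [InnerProductSpace ℝ E]
    [FiniteDimensional ℝ E] {r : ℕ} (c : Fin r → E) : Prop :=
  ∀ i : Fin r,
    ∀ v ∈ latE (fun j => projPerp (c '' { j : Fin r | j < i }) (c j)),
      v ≠ 0 → ‖projPerp (c '' { j : Fin r | j < i }) (c i)‖ ≤ ‖v‖

/-- A basis `b_0, ..., b_{r-1}` of a lattice is RKZ reduced if its reciprocal basis
(the unique family `b'` in the span with `⟨b_i, b'_j⟩ = 1` if `i + j = r + 1` (1-indexed)
and `0` otherwise) is Korkhine-Zolotarev reduced. -/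
def RKZReduced {E : Type*} [NormedAddCommGroup E] [InnerProductSpace ℝ E]
    [FiniteDimensional ℝ E] {r : ℕ} (b : Fin r → E) : Prop :=
  ∃ b' : Fin r → E,
    (∀ j, b' j ∈ Submodule.span ℝ (Set.range b)) ∧
    (∀ i j : Fin r, (inner ℝ (b i) (b' j) : ℝ) =
      if (i : ℕ) + (j : ℕ) + 1 = r then 1 else 0) ∧
    KZReduced b'


open Submodule Set Finset Matrix Module InnerProductSpace

section Lemmas

variable {E : Type*} [NormedAddCommGroup E] [InnerProductSpace ℝ E] {n : ℕ}
variable {F : Type*} [NormedAddCommGroup F] [InnerProductSpace ℝ F]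

instance finWF : WellFoundedLT (Fin n) := inferInstance

local notation "⟪" x ", " y "⟫" => @inner ℝ _ _ x y


lemma inner_span_zero (S : Set E) (v : E) (h : ∀ u ∈ S, ⟪u, v⟫ = 0) :
    ∀ x ∈ Submodule.span ℝ S, ⟪x, v⟫ = 0 := by
  intro x hx
  induction hx using Submodule.span_induction with
  | mem u hu => exact h u hu
  | zero => simp
  | add a b _ _ ha hb => rw [inner_add_left, ha, hb, add_zero]
  | smul t a _ ha => rw [real_inner_smul_left, ha, mul_zero]



lemma gs_perp (c : Fin n → E) (i : Fin n) :
    ∀ x ∈ Submodule.span ℝ (c '' Set.Iio i), ⟪x, gramSchmidt ℝ c i⟫ = 0 := by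
  rw [← span_gramSchmidt_Iio ℝ c i]
  apply inner_span_zero
  rintro u ⟨j, hj, rfl⟩
  exact gramSchmidt_orthogonal ℝ c (ne_of_lt hj)

lemma gs_sub_mem (c : Fin n → E) (i : Fin n) :
    c i - gramSchmidt ℝ c i ∈ Submodule.span ℝ (c '' Set.Iio i) := by
  rw [← span_gramSchmidt_Iio ℝ c i]
  have := gramSchmidt_def ℝ c i
  have h2 : c i - gramSchmidt ℝ c i
      = ∑ j ∈ Finset.Iio i, (orthogonalProjection (ℝ ∙ gramSchmidt ℝ c j) (c i) : E) := by
    rw [this]; abel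
  rw [h2]
  refine Submodule.sum_mem _ fun j hj => ?_
  have : (orthogonalProjection (ℝ ∙ gramSchmidt ℝ c j) (c i) : E) ∈ ℝ ∙ gramSchmidt ℝ c j :=
    SetLike.coe_mem _
  refine Submodule.span_mono ?_ this
  simp only [Set.singleton_subset_iff]
  exact ⟨j, Finset.mem_Iio.1 hj, rfl⟩

lemma gs_unique (c : Fin n → E) (i : Fin n) (v : E)
    (h1 : c i - v ∈ Submodule.span ℝ (c '' Set.Iio i))
    (h2 : ∀ u ∈ c '' Set.Iio i, ⟪u, v⟫ = 0) : gramSchmidt ℝ c i = v := by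
  have hd : gramSchmidt ℝ c i - v ∈ Submodule.span ℝ (c '' Set.Iio i) := by
    have := Submodule.sub_mem _ h1 (gs_sub_mem c i)
    simpa using this
  have hz : ⟪gramSchmidt ℝ c i - v, gramSchmidt ℝ c i - v⟫ = 0 := by
    rw [inner_sub_right]
    rw [gs_perp c i _ hd, inner_span_zero _ v h2 _ hd, sub_zero]
  rw [← sub_eq_zero]
  exact inner_self_eq_zero.1 hz

lemma inner_self_gs (c : Fin n → E) (i : Fin n) :
    ⟪c i, gramSchmidt ℝ c i⟫ = ‖gramSchmidt ℝ c i‖ ^ 2 := by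
  have : c i = (c i - gramSchmidt ℝ c i) + gramSchmidt ℝ c i := by abel
  rw [this, inner_add_left, gs_perp c i _ (gs_sub_mem c i), zero_add,
    real_inner_self_eq_norm_sq]

lemma latDet_eq_prod (c : Fin n → E) (hc : LinearIndependent ℝ c) :
    latDet c = ∏ m, ‖gramSchmidt ℝ c m‖ := by
  set u := gramSchmidtNormed ℝ c with hu_def
  have hu : Orthonormal ℝ u := gramSchmidtNormed_orthonormal hc
  have hmem : ∀ a, c a ∈ Submodule.span ℝ (Set.range u) := by
    intro a
    rw [hu_def, span_gramSchmidtNormed_range, span_gramSchmidt]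
    exact subset_span ⟨a, rfl⟩
  have key : ∀ a b, ⟪c a, c b⟫ = ∑ m, ⟪c a, u m⟫ * ⟪c b, u m⟫ := by
    intro a b
    obtain ⟨w, hw⟩ := (mem_span_range_iff_exists_fun ℝ).1 (hmem b)
    have hwm : ∀ m, ⟪c b, u m⟫ = w m := by
      intro m
      rw [real_inner_comm, ← hw, hu.inner_right_fintype]
    calc ⟪c a, c b⟫ = ⟪c a, ∑ m, w m • u m⟫ := by rw [hw]
    _ = ∑ m, w m * ⟪c a, u m⟫ := by rw [inner_sum]; simp [real_inner_smul_right]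
    _ = ∑ m, ⟪c a, u m⟫ * ⟪c b, u m⟫ := by
        refine Finset.sum_congr rfl fun m _ => ?_
        rw [hwm m, mul_comm]
  set A : Matrix (Fin n) (Fin n) ℝ := Matrix.of fun a m => ⟪c a, u m⟫ with hA
  have hgram : (Matrix.of fun i j : Fin n => (⟪c i, c j⟫ : ℝ)) = A * Aᵀ := by
    ext a b
    simp only [Matrix.of_apply, Matrix.mul_apply, Matrix.transpose_apply, hA]
    exact key a b
  have htri : A.BlockTriangular OrderDual.toDual := by
    intro a m h
    have h' : a < m := h
    simp only [hA, Matrix.of_apply, hu_def, gramSchmidtNormed, real_inner_smul_right,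
      real_inner_comm (c a)]
    simp only [mul_eq_zero, inv_eq_zero, norm_eq_zero]
    exact Or.inr (by rw [real_inner_comm]; exact gramSchmidt_inv_triangular ℝ c h')
  have hdiag : ∀ a, A a a = ‖gramSchmidt ℝ c a‖ := by
    intro a
    have hne : gramSchmidt ℝ c a ≠ 0 := gramSchmidt_ne_zero a hc
    have hnorm : ‖gramSchmidt ℝ c a‖ ≠ 0 := norm_ne_zero_iff.2 hne
    simp only [hA, Matrix.of_apply, hu_def, gramSchmidtNormed, real_inner_smul_right]
    rw [inner_self_gs c a]
    field_simp
    rfl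
  have hdetA : A.det = ∏ m, ‖gramSchmidt ℝ c m‖ := by
    rw [Matrix.det_of_lowerTriangular A htri]
    exact Finset.prod_congr rfl fun m _ => hdiag m
  rw [latDet, hgram, Matrix.det_mul, Matrix.det_transpose, hdetA, ← pow_two]
  rw [Real.sqrt_sq (Finset.prod_nonneg fun m _ => norm_nonneg _)]

lemma gsE_eq (c : Fin n → E) : gsE c = gramSchmidt ℝ c := rfl

lemma lambda1_nonneg (c : Fin n → E) : 0 ≤ lambda1 c :=
  Real.sInf_nonneg (by rintro t ⟨v, _, _, rfl⟩; exact norm_nonneg v)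

lemma lambda1_le_norm (c : Fin n → E) {v : E} (hv : v ∈ latE c) (h0 : v ≠ 0) :
    lambda1 c ≤ ‖v‖ := by
  refine csInf_le ⟨0, ?_⟩ ⟨v, hv, h0, rfl⟩
  rintro t ⟨w, _, _, rfl⟩; exact norm_nonneg w

lemma le_lambda1 (c : Fin n → E) {x : ℝ} {w : E} (hw : w ∈ latE c) (hw0 : w ≠ 0)
    (h : ∀ v ∈ latE c, v ≠ 0 → x ≤ ‖v‖) : x ≤ lambda1 c := by
  refine le_csInf ⟨‖w‖, w, hw, hw0, rfl⟩ ?_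
  rintro t ⟨v, hv, h0, rfl⟩; exact h v hv h0

lemma lambda1_le_lambda1 {m : ℕ} {c : Fin m → E} {d : Fin n → E}
    (h : (latE c : Set E) ⊆ (latE d : Set E)) {w : E} (hw : w ∈ latE c) (hw0 : w ≠ 0) :
    lambda1 d ≤ lambda1 c := by
  refine le_csInf ⟨‖w‖, w, hw, hw0, rfl⟩ ?_
  rintro t ⟨v, hv, h0, rfl⟩
  exact lambda1_le_norm d (h hv) h0

-- transport under linear isometries
lemma latE_comp_isometry (f : E →ₗᵢ[ℝ] F) (c : Fin n → E) :
    latE (fun m => f (c m)) = (latE c).map f.toLinearMap.toAddMonoidHom := by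
  rw [latE, latE, AddMonoidHom.map_closure]
  congr 1
  rw [← Set.range_comp]; rfl

lemma lambda1_comp_isometry (f : E →ₗᵢ[ℝ] F) (c : Fin n → E) :
    lambda1 (fun m => f (c m)) = lambda1 c := by
  unfold lambda1
  congr 1
  ext t
  constructor
  · rintro ⟨v, hv, h0, rfl⟩
    rw [latE_comp_isometry] at hv
    obtain ⟨w, hw, rfl⟩ := hv
    exact ⟨w, hw, fun h => h0 (by simp [h]), (f.norm_map w).symm⟩
  · rintro ⟨w, hw, h0, rfl⟩
    refine ⟨f w, ?_, ?_, f.norm_map w⟩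
    · rw [latE_comp_isometry]; exact ⟨w, hw, rfl⟩
    · simpa using fun h => h0 (f.injective (by simpa using h))

lemma latDet_comp_isometry (f : E →ₗᵢ[ℝ] F) (c : Fin n → E) :
    latDet (fun m => f (c m)) = latDet c := by
  unfold latDet
  congr 2 with i j
  exact f.inner_map_map (c i) (c j)

lemma linearIndependent_comp_isometry {f : E →ₗᵢ[ℝ] F} {c : Fin n → E}
    (hc : LinearIndependent ℝ c) : LinearIndependent ℝ (fun m => f (c m)) :=
  hc.map' f.toLinearMap (LinearMap.ker_eq_bot.2 f.injective)

lemma latDet_pos (c : Fin n → E) (hc : LinearIndependent ℝ c) : 0 < latDet c := by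
  have : latDet c = ∏ m, ‖gramSchmidt ℝ c m‖ := latDet_eq_prod c hc
  rw [this]
  exact Finset.prod_pos fun m _ => norm_pos_iff.2 (gramSchmidt_ne_zero m hc)

lemma hermite_bound {F : Type*} [NormedAddCommGroup F] [InnerProductSpace ℝ F]
    [FiniteDimensional ℝ F] {j : ℕ} (hj : 0 < j) (c : Fin j → F)
    (hc : LinearIndependent ℝ c) (hpos : 0 < hermiteC j) :
    lambda1 c ^ 2 ≤ hermiteC j * latDet c ^ ((2 : ℝ) / j) := by
  classical
  set U := Submodule.span ℝ (Set.range c) with hU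
  have hrank : finrank ℝ U = j := by
    rw [hU, finrank_span_eq_card hc, Fintype.card_fin]
  have : FiniteDimensional ℝ U := inferInstance
  set ob := (stdOrthonormalBasis ℝ U).reindex (finCongr (by rw [hrank])) with hob
  set f : U ≃ₗᵢ[ℝ] EuclideanSpace ℝ (Fin j) := ob.repr with hf
  set cU : Fin j → U := fun m => ⟨c m, subset_span ⟨m, rfl⟩⟩ with hcU
  have hcomp : ∀ m, (U.subtypeₗᵢ) (cU m) = c m := fun m => rfl
  have hcUli : LinearIndependent ℝ cU := by
    apply LinearIndependent.of_comp U.subtype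
    exact hc
  set c' : Fin j → EuclideanSpace ℝ (Fin j) := fun m => f.toLinearIsometry (cU m) with hc'
  have hc'li : LinearIndependent ℝ c' := linearIndependent_comp_isometry hcUli
  have hl1 : lambda1 c' = lambda1 c := by
    rw [hc', lambda1_comp_isometry f.toLinearIsometry cU, ← lambda1_comp_isometry U.subtypeₗᵢ cU]
    congr 1
  have hld : latDet c' = latDet c := by
    rw [hc', latDet_comp_isometry f.toLinearIsometry cU, ← latDet_comp_isometry U.subtypeₗᵢ cU]
    congr 1
  have hmem : lambda1 c' ^ 2 / latDet c' ^ ((2 : ℝ) / j) ∈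
      { t | ∃ d : Fin j → EuclideanSpace ℝ (Fin j), LinearIndependent ℝ d ∧
        t = lambda1 d ^ 2 / latDet d ^ ((2 : ℝ) / j) } := ⟨c', hc'li, rfl⟩
  by_cases hbdd : BddAbove { t | ∃ d : Fin j → EuclideanSpace ℝ (Fin j),
      LinearIndependent ℝ d ∧ t = lambda1 d ^ 2 / latDet d ^ ((2 : ℝ) / j) }
  · have hle : lambda1 c' ^ 2 / latDet c' ^ ((2 : ℝ) / j) ≤ hermiteC j :=
      le_csSup hbdd hmem
    rw [hl1, hld] at hle
    have hdpos : (0:ℝ) < latDet c ^ ((2 : ℝ) / j) :=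
      Real.rpow_pos_of_pos (latDet_pos c hc) _
    calc lambda1 c ^ 2 = lambda1 c ^ 2 / latDet c ^ ((2 : ℝ) / j) * latDet c ^ ((2 : ℝ) / j) := by
          field_simp
    _ ≤ hermiteC j * latDet c ^ ((2 : ℝ) / j) :=
        mul_le_mul_of_nonneg_right hle hdpos.le
  · exfalso
    have : hermiteC j = 0 := Real.sSup_of_not_bddAbove hbdd
    rw [this] at hpos; exact lt_irrefl 0 hpos

end Lemmas

section Dual

variable {E : Type*} [NormedAddCommGroup E] [InnerProductSpace ℝ E] {r : ℕ}

local notation "⟪" x ", " y "⟫" => @inner ℝ _ _ x y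

variable {b b' : Fin (r + 1) → E}

lemma pair' (hpair : ∀ i j : Fin (r+1), ⟪b i, b' j⟫ = if (i : ℕ) + (j : ℕ) + 1 = r + 1 then 1 else 0)
    (i j : Fin (r+1)) : ⟪b i, b' j⟫ = if (i : ℕ) + (j : ℕ) = r then 1 else 0 := by
  rw [hpair i j]
  congr 1
  simp only [eq_iff_iff]
  omega

lemma bprime_li
    (hpair : ∀ i j : Fin (r+1), ⟪b i, b' j⟫ = if (i : ℕ) + (j : ℕ) + 1 = r + 1 then 1 else 0) :
    LinearIndependent ℝ b' := by
  rw [Fintype.linearIndependent_iff]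
  intro g hg j
  have hj := j.isLt
  have h1 : ⟪b ⟨r - (j : ℕ), by omega⟩, ∑ t, g t • b' t⟫ = g j := by
    rw [inner_sum]
    rw [Finset.sum_eq_single j]
    · rw [real_inner_smul_right, pair' hpair,
        if_pos (show r - (j : ℕ) + (j : ℕ) = r by omega)]
      ring
    · intro t _ ht
      have htv : (t : ℕ) ≠ (j : ℕ) := fun h => ht (Fin.ext h)
      rw [real_inner_smul_right, pair' hpair,
        if_neg (show ¬ (r - (j : ℕ) + (t : ℕ) = r) by have := t.isLt; omega)]
      ring
    · simp
  rw [hg] at h1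
  simpa using h1.symm

lemma span_bprime (hb : LinearIndependent ℝ b)
    (hspan : ∀ j, b' j ∈ Submodule.span ℝ (Set.range b))
    (hpair : ∀ i j : Fin (r+1), ⟪b i, b' j⟫ = if (i : ℕ) + (j : ℕ) + 1 = r + 1 then 1 else 0) :
    Submodule.span ℝ (Set.range b') = Submodule.span ℝ (Set.range b) := by
  haveI : FiniteDimensional ℝ (Submodule.span ℝ (Set.range b)) := by
    apply FiniteDimensional.span_of_finite
    exact Set.finite_range b
  apply Submodule.eq_of_le_of_finrank_le (Submodule.span_le.2 (Set.range_subset_iff.2 hspan))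
  rw [finrank_span_eq_card hb, finrank_span_eq_card (bprime_li hpair)]

lemma mem_span_bprime_iio (hb : LinearIndependent ℝ b)
    (hspan : ∀ j, b' j ∈ Submodule.span ℝ (Set.range b))
    (hpair : ∀ i j : Fin (r+1), ⟪b i, b' j⟫ = if (i : ℕ) + (j : ℕ) + 1 = r + 1 then 1 else 0)
    (k : Fin (r+1)) (x : E) (hx : x ∈ Submodule.span ℝ (Set.range b))
    (horth : ∀ m : Fin (r+1), (m : ℕ) + (k : ℕ) ≤ r → ⟪b m, x⟫ = 0) :
    x ∈ Submodule.span ℝ (b' '' Set.Iio k) := by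
  classical
  rw [← span_bprime hb hspan hpair] at hx
  obtain ⟨a, ha⟩ := (mem_span_range_iff_exists_fun ℝ).1 hx
  have hcoord : ∀ t : Fin (r+1), a t = ⟪b ⟨r - (t : ℕ), by omega⟩, x⟫ := by
    intro t
    rw [← ha, inner_sum]
    rw [Finset.sum_eq_single t]
    · rw [real_inner_smul_right, pair' hpair,
        if_pos (show r - (t : ℕ) + (t : ℕ) = r by have := t.isLt; omega)]
      ring
    · intro s _ hs
      have hsv : (s : ℕ) ≠ (t : ℕ) := fun h => hs (Fin.ext h)
      rw [real_inner_smul_right, pair' hpair,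
        if_neg (show ¬ (r - (t : ℕ) + (s : ℕ) = r) by have := s.isLt; have := t.isLt; omega)]
      ring
    · simp
  have hzero : ∀ t : Fin (r+1), k ≤ t → a t = 0 := by
    intro t ht
    rw [hcoord t]
    refine horth _ ?_
    show r - (t : ℕ) + (k : ℕ) ≤ r
    have h1 := t.isLt
    have h2 := k.isLt
    rw [Fin.le_def] at ht
    omega
  rw [← ha]
  rw [← Finset.sum_filter_add_sum_filter_not Finset.univ (· < k)]
  have h2 : ∑ t ∈ Finset.univ.filter (fun t => ¬ t < k), a t • b' t = 0 := by
    apply Finset.sum_eq_zero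
    intro t ht
    rw [hzero t (le_of_not_gt (Finset.mem_filter.1 ht).2)]
    simp
  rw [h2, add_zero]
  apply Submodule.sum_mem
  intro t ht
  exact Submodule.smul_mem _ _ (Submodule.subset_span
    ⟨t, (Finset.mem_filter.1 ht).2, rfl⟩)

lemma gs_dual (hb : LinearIndependent ℝ b)
    (hspan : ∀ j, b' j ∈ Submodule.span ℝ (Set.range b))
    (hpair : ∀ i j : Fin (r+1), ⟪b i, b' j⟫ = if (i : ℕ) + (j : ℕ) + 1 = r + 1 then 1 else 0)
    (k : Fin (r+1)) :
    gramSchmidt ℝ b' k =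
      (‖gramSchmidt ℝ b ⟨r - (k : ℕ), by omega⟩‖ ^ 2)⁻¹ •
        gramSchmidt ℝ b ⟨r - (k : ℕ), by omega⟩ := by
  have hk := k.isLt
  set i' : Fin (r+1) := ⟨r - (k : ℕ), by omega⟩ with hi'
  have hgne : gramSchmidt ℝ b i' ≠ 0 := gramSchmidt_ne_zero i' hb
  have hgnorm : ‖gramSchmidt ℝ b i'‖ ≠ 0 := norm_ne_zero_iff.2 hgne
  set v : E := (‖gramSchmidt ℝ b i'‖ ^ 2)⁻¹ • gramSchmidt ℝ b i' with hv
  have hgmem : gramSchmidt ℝ b i' ∈ Submodule.span ℝ (b '' Set.Iic i') :=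
    gramSchmidt_mem_span ℝ b le_rfl
  apply gs_unique
  · -- b' k - v ∈ span (b' '' Iio k)
    apply mem_span_bprime_iio hb hspan hpair
    · apply Submodule.sub_mem
      · exact hspan k
      · rw [hv]
        apply Submodule.smul_mem
        refine Submodule.span_mono ?_ hgmem
        exact Set.image_subset_range _ _ |>.trans (by simp)
    · intro m hm
      have hmval := m.isLt
      rw [inner_sub_right, pair' hpair]
      rcases Nat.lt_or_ge ((m : ℕ) + (k : ℕ)) r with hlt | hge
      · rw [if_neg (by omega), hv, real_inner_smul_right]
        have : ⟪b m, gramSchmidt ℝ b i'⟫ = 0 := by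
          apply gs_perp b i'
          apply Submodule.subset_span
          refine ⟨m, Set.mem_Iio.2 ?_, rfl⟩
          rw [Fin.lt_def]
          show (m : ℕ) < r - (k : ℕ)
          omega
        rw [this]; ring
      · have heq : (m : ℕ) + (k : ℕ) = r := le_antisymm hm hge
        have hmi' : m = i' := by
          apply Fin.ext; simp [hi']; omega
        rw [if_pos heq, hmi', hv, real_inner_smul_right, inner_self_gs]
        field_simp
        simp
  · -- orthogonality
    rintro u ⟨t, ht, rfl⟩
    rw [hv, real_inner_smul_right]
    have : ⟪gramSchmidt ℝ b i', b' t⟫ = 0 := by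
      apply inner_span_zero (b '' Set.Iic i') (b' t) ?_ _ hgmem
      rintro u ⟨s, hs, rfl⟩
      rw [pair' hpair]
      apply if_neg
      simp only [Set.mem_Iic, Fin.le_def] at hs
      simp only [Set.mem_Iio, Fin.lt_def] at ht
      simp only [hi', Fin.val_mk] at hs
      omega
    rw [real_inner_comm] at this
    rw [this]; ring

lemma gs_dual_norm (hb : LinearIndependent ℝ b)
    (hspan : ∀ j, b' j ∈ Submodule.span ℝ (Set.range b))
    (hpair : ∀ i j : Fin (r+1), ⟪b i, b' j⟫ = if (i : ℕ) + (j : ℕ) + 1 = r + 1 then 1 else 0)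
    (k : Fin (r+1)) :
    ‖gramSchmidt ℝ b' k‖ = ‖gramSchmidt ℝ b ⟨r - (k : ℕ), by omega⟩‖⁻¹ := by
  rw [gs_dual hb hspan hpair k, norm_smul]
  set N := ‖gramSchmidt ℝ b ⟨r - (k : ℕ), by omega⟩‖ with hN
  have hNne : N ≠ 0 :=
    norm_ne_zero_iff.2 (gramSchmidt_ne_zero _ hb)
  rw [Real.norm_eq_abs, abs_inv, abs_pow, abs_norm]
  field_simp
  rw [← hN]; field_simp

end Dual

local notation "⟪" x ", " y "⟫" => @inner ℝ _ _ x y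

/-- for an RKZ-reduced basis `b_1, ..., b_r` of a lattice `L`, the Gram-Schmidt
vectors satisfy `‖b_i^*‖ ≥ λ₁(L) / C_i`, where `C_i` is Hermite's constant of rank `i`.
Here the rank is `r + 1`, and index `i : Fin (r+1)` corresponds to the 1-indexed `i + 1`. -/
theorem gs_ge_of_RKZ {E : Type*} [NormedAddCommGroup E]
    [InnerProductSpace ℝ E] [FiniteDimensional ℝ E] {r : ℕ}
    (b : Fin (r + 1) → E) (hb : LinearIndependent ℝ b) (hrkz : RKZReduced b) :
    ∀ i : Fin (r + 1), lambda1 b / hermiteC ((i : ℕ) + 1) ≤ ‖gsE b i‖ := by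
  classical
  obtain ⟨b', hspan, hpair, hKZ⟩ := hrkz
  intro i
  set j : ℕ := (i : ℕ) + 1 with hj
  rcases le_or_gt (hermiteC j) 0 with hγ | hγpos
  · have h1 : lambda1 b / hermiteC j ≤ 0 :=
      div_nonpos_iff.mpr (Or.inl ⟨lambda1_nonneg b, hγ⟩)
    exact h1.trans (norm_nonneg _)
  have hb'li : LinearIndependent ℝ b' := bprime_li hpair
  have hiLt := i.isLt
  set k₀ : Fin (r+1) := ⟨r - (i : ℕ), by omega⟩ with hk0
  set S : Set E := b' '' {t : Fin (r+1) | t < k₀} with hS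
  have hSIio : S = b' '' Set.Iio k₀ := rfl
  set K : Submodule ℝ E := (Submodule.span ℝ S)ᗮ with hK
  have hproj : ∀ x : E, projPerp S x = (orthogonalProjection K x : E) := fun x => rfl
  have hπ_add : ∀ x y, projPerp S (x + y) = projPerp S x + projPerp S y := by
    intro x y; simp [projPerp, map_add]
  have hπ_smul : ∀ (t : ℝ) (x), projPerp S (t • x) = t • projPerp S x := by
    intro t x
    show ((orthogonalProjection K (t • x) : K) : E) = t • ((orthogonalProjection K x : K) : E)
    rw [ContinuousLinearMap.map_smul]
    rfl
  have hπ_zero : projPerp S 0 = 0 := by simp [projPerp]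
  have hπ_self : ∀ x ∈ K, projPerp S x = x := by
    intro x hx
    rw [hproj]
    exact congrArg _ (orthogonalProjection_mem_subspace_eq_self (⟨x, hx⟩ : K))
  have hπ0 : ∀ t : Fin (r+1), t < k₀ → projPerp S (b' t) = 0 := by
    intro t ht
    rw [hproj]
    have hmem : b' t ∈ Kᗮ := by
      rw [hK, Submodule.orthogonal_orthogonal]
      exact Submodule.subset_span ⟨t, ht, rfl⟩
    rw [Submodule.orthogonalProjectionOnto_apply_of_mem_orthogonal hmem]
    rfl
  have hg'K : ∀ m : Fin (r+1), k₀ ≤ m → gramSchmidt ℝ b' m ∈ K := by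
    intro m hm
    rw [hK, Submodule.mem_orthogonal]
    intro u hu
    have hsub : S ⊆ b' '' Set.Iio m := by
      rintro _ ⟨t, ht, rfl⟩; exact ⟨t, lt_of_lt_of_le ht hm, rfl⟩
    exact gs_perp b' m u (Submodule.span_mono hsub hu)
  set am : Fin ((i : ℕ)+1) → Fin (r+1) :=
    fun m => ⟨r - (i : ℕ) + (m : ℕ), by have := m.isLt; omega⟩ with ham
  have ham_lt : ∀ {l m : Fin ((i : ℕ)+1)}, l < m → am l < am m := by
    intro l m h
    rw [Fin.lt_def] at h ⊢
    show r - (i : ℕ) + (l : ℕ) < r - (i : ℕ) + (m : ℕ)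
    omega
  have ham_inj : Function.Injective am := by
    intro l m h
    have := congrArg Fin.val h
    simp only [ham] at this
    exact Fin.ext (by omega)
  have hk0_le_am : ∀ m, k₀ ≤ am m := by
    intro m
    rw [Fin.le_def]
    show r - (i : ℕ) ≤ r - (i : ℕ) + (m : ℕ)
    omega
  have ham0 : am 0 = k₀ := by
    apply Fin.ext
    show r - (i : ℕ) + ((0 : Fin ((i : ℕ)+1)) : ℕ) = r - (i : ℕ)
    simp
  set q : Fin ((i : ℕ)+1) → E := fun m => projPerp S (b' (am m)) with hq
  have hS_le : ∀ m : Fin ((i : ℕ)+1),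
      Submodule.span ℝ S ≤ Submodule.span ℝ (b' '' Set.Iio (am m)) := by
    intro m
    apply Submodule.span_mono
    rintro _ ⟨t, ht, rfl⟩
    exact ⟨t, lt_of_lt_of_le ht (hk0_le_am m), rfl⟩
  have hdecomp : ∀ x : E, x - projPerp S x ∈ Submodule.span ℝ S := by
    intro x
    rw [hproj]
    have h := Submodule.starProjection_add_starProjection_orthogonal (K := Submodule.span ℝ S) x
    have h2 : x - (orthogonalProjection K x : E) =
        (orthogonalProjection (Submodule.span ℝ S) x : E) := by
      rw [sub_eq_iff_eq_add]
      exact h.symm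
    rw [h2]
    exact SetLike.coe_mem _
  have hqK : ∀ m, q m ∈ K := fun m => SetLike.coe_mem _
  have hq_gs : ∀ m, gramSchmidt ℝ q m = gramSchmidt ℝ b' (am m) := by
    intro m
    apply gs_unique
    · have hw1 : q m - gramSchmidt ℝ b' (am m) ∈ K :=
        Submodule.sub_mem _ (hqK m) (hg'K _ (hk0_le_am m))
      have hw2 : q m - gramSchmidt ℝ b' (am m) ∈
          Submodule.span ℝ (b' '' Set.Iio (am m)) := by
        have h1 : b' (am m) - gramSchmidt ℝ b' (am m) ∈
            Submodule.span ℝ (b' '' Set.Iio (am m)) := gs_sub_mem b' (am m)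
        have h2 := hS_le m (hdecomp (b' (am m)))
        have h3 := Submodule.sub_mem _ h1 h2
        convert h3 using 1
        abel
      have hπ_span : ∀ x ∈ Submodule.span ℝ (b' '' Set.Iio (am m)),
          projPerp S x ∈ Submodule.span ℝ (q '' Set.Iio m) := by
        intro x hx
        induction hx using Submodule.span_induction with
        | mem u hu =>
          obtain ⟨t, ht, rfl⟩ := hu
          rcases lt_or_ge t k₀ with hcase | hcase
          · rw [hπ0 t hcase]; exact Submodule.zero_mem _
          · rw [Fin.le_def] at hcase
            have hcase' : r - (i : ℕ) ≤ (t : ℕ) := hcase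
            rw [Set.mem_Iio, Fin.lt_def] at ht
            have ht' : (t : ℕ) < r - (i : ℕ) + (m : ℕ) := ht
            have hlval : (t : ℕ) - (r - (i : ℕ)) < (i : ℕ) + 1 := by
              have := t.isLt; omega
            set l : Fin ((i : ℕ)+1) := ⟨(t : ℕ) - (r - (i : ℕ)), hlval⟩ with hl
            have haml : am l = t := by
              apply Fin.ext
              show r - (i : ℕ) + ((t : ℕ) - (r - (i : ℕ))) = (t : ℕ)
              omega
            have hlm : l < m := by
              rw [Fin.lt_def]
              show (t : ℕ) - (r - (i : ℕ)) < (m : ℕ)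
              omega
            refine Submodule.subset_span ⟨l, hlm, ?_⟩
            show projPerp S (b' (am l)) = projPerp S (b' t)
            rw [haml]
        | zero => rw [hπ_zero]; exact Submodule.zero_mem _
        | add x y _ _ hx hy => rw [hπ_add]; exact Submodule.add_mem _ hx hy
        | smul t x _ hx => rw [hπ_smul]; exact Submodule.smul_mem _ _ hx
      have hres := hπ_span _ hw2
      rwa [hπ_self _ hw1] at hres
    · rintro u ⟨l, hl, rfl⟩
      have hql : q l ∈ Submodule.span ℝ (b' '' Set.Iio (am m)) := by
        have h1 : b' (am l) ∈ Submodule.span ℝ (b' '' Set.Iio (am m)) :=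
          Submodule.subset_span ⟨am l, ham_lt hl, rfl⟩
        have h2 := hS_le m (hdecomp (b' (am l)))
        have h3 := Submodule.sub_mem _ h1 h2
        convert h3 using 1
        show q l = b' (am l) - (b' (am l) - projPerp S (b' (am l)))
        abel
      exact gs_perp b' (am m) _ hql
  have hq0gs : gramSchmidt ℝ q 0 = q 0 := by
    apply gs_unique
    · rw [sub_self]; exact Submodule.zero_mem _
    · rintro u ⟨l, hl, rfl⟩
      exact absurd hl (by simp)
  have hq0 : q 0 = gramSchmidt ℝ b' k₀ := by
    rw [← hq0gs, hq_gs 0, ham0]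
  have hg'ne : ∀ m : Fin ((i : ℕ)+1), gramSchmidt ℝ b' (am m) ≠ 0 :=
    fun m => gramSchmidt_ne_zero _ hb'li
  have hq_li : LinearIndependent ℝ q := by
    have honb : Orthonormal ℝ
        (fun m : Fin ((i : ℕ)+1) =>
          ‖gramSchmidt ℝ b' (am m)‖⁻¹ • gramSchmidt ℝ b' (am m)) := by
      constructor
      · intro m; exact norm_smul_inv_norm (hg'ne m)
      · intro l m hlm
        have hne : am l ≠ am m := fun h => hlm (ham_inj h)
        rw [real_inner_smul_left, real_inner_smul_right,
          gramSchmidt_orthogonal ℝ b' hne]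
        ring
    have hgsli : LinearIndependent ℝ (fun m => gramSchmidt ℝ b' (am m)) := by
      have h := honb.linearIndependent.units_smul
        (fun m => Units.mk0 ‖gramSchmidt ℝ b' (am m)‖
          (norm_ne_zero_iff.2 (hg'ne m)))
      convert h using 1
      funext m
      show gramSchmidt ℝ b' (am m) = _
      rw [Pi.smul_apply']
      rw [Units.smul_mk0]
      rw [smul_smul, mul_inv_cancel₀ (norm_ne_zero_iff.2 (hg'ne m)), one_smul]
      rfl
    have hrange : Set.range (fun m => gramSchmidt ℝ b' (am m)) =
        Set.range (gramSchmidt ℝ q) := by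
      rw [show (fun m => gramSchmidt ℝ b' (am m)) = gramSchmidt ℝ q from
        funext fun m => (hq_gs m).symm]
    rw [linearIndependent_iff_card_eq_finrank_span] at hgsli ⊢
    rw [hgsli, hrange]
    unfold Set.finrank
    rw [span_gramSchmidt ℝ q]
  have hlatEq : latE q = latE (fun t : Fin (r+1) => projPerp S (b' t)) := by
    apply le_antisymm
    · rw [latE]
      rw [AddSubgroup.closure_le]
      rintro _ ⟨m, rfl⟩
      exact AddSubgroup.subset_closure ⟨am m, rfl⟩
    · rw [latE]
      rw [AddSubgroup.closure_le]
      rintro _ ⟨t, rfl⟩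
      show projPerp S (b' t) ∈ latE q
      rcases lt_or_ge t k₀ with hcase | hcase
      · rw [hπ0 t hcase]
        exact AddSubgroup.zero_mem _
      · rw [Fin.le_def] at hcase
        have hcase' : r - (i : ℕ) ≤ (t : ℕ) := hcase
        have hlval : (t : ℕ) - (r - (i : ℕ)) < (i : ℕ) + 1 := by
          have := t.isLt; omega
        have haml : am ⟨(t : ℕ) - (r - (i : ℕ)), hlval⟩ = t := by
          apply Fin.ext
          show r - (i : ℕ) + ((t : ℕ) - (r - (i : ℕ))) = (t : ℕ)
          omega
        have : projPerp S (b' t) = q ⟨(t : ℕ) - (r - (i : ℕ)), hlval⟩ := by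
          show projPerp S (b' t) = projPerp S (b' (am _))
          rw [haml]
        rw [this]
        exact AddSubgroup.subset_closure ⟨_, rfl⟩
  have hshort : ∀ v ∈ latE q, v ≠ 0 → ‖gramSchmidt ℝ b' k₀‖ ≤ ‖v‖ := by
    intro v hv h0
    have hv' : v ∈ latE (fun t : Fin (r+1) => projPerp S (b' t)) := by
      rwa [hlatEq] at hv
    have hres := hKZ k₀ v hv' h0
    have hpq : projPerp S (b' k₀) = gramSchmidt ℝ b' k₀ := by
      rw [← hq0]
      show projPerp S (b' k₀) = projPerp S (b' (am 0))
      rw [ham0]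
    rwa [hpq] at hres
  have hq0mem : q 0 ∈ latE q := AddSubgroup.subset_closure ⟨0, rfl⟩
  have hq0ne : q 0 ≠ 0 := by
    rw [hq0]; exact gramSchmidt_ne_zero _ hb'li
  have hlam_q : ‖gramSchmidt ℝ b' k₀‖ ≤ lambda1 q := le_lambda1 q hq0mem hq0ne hshort
  have hB := hermite_bound (show 0 < j by omega) q hq_li hγpos
  set cst : Fin ((i : ℕ)+1) → Fin (r+1) :=
    fun m => ⟨(m : ℕ), by have := m.isLt; omega⟩ with hcst
  have hgnorm_pos : ∀ t : Fin (r+1), 0 < ‖gramSchmidt ℝ b t‖ :=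
    fun t => norm_pos_iff.2 (gramSchmidt_ne_zero t hb)
  set D : ℝ := ∏ m : Fin ((i : ℕ)+1), ‖gramSchmidt ℝ b (cst m)‖ with hD
  have hDpos : 0 < D := Finset.prod_pos fun m _ => hgnorm_pos _
  have hdetq : latDet q = D⁻¹ := by
    rw [latDet_eq_prod q hq_li]
    have h1 : ∀ m : Fin ((i : ℕ)+1),
        ‖gramSchmidt ℝ q m‖ = ‖gramSchmidt ℝ b (cst (Fin.rev m))‖⁻¹ := by
      intro m
      rw [hq_gs m, gs_dual_norm hb hspan hpair (am m)]
      congr 3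
      apply Fin.ext
      show r - (r - (i : ℕ) + (m : ℕ)) = ((Fin.rev m : Fin ((i : ℕ)+1)) : ℕ)
      rw [Fin.val_rev]
      have := m.isLt
      omega
    calc ∏ m, ‖gramSchmidt ℝ q m‖
        = ∏ m, ‖gramSchmidt ℝ b (cst (Fin.rev m))‖⁻¹ :=
          Finset.prod_congr rfl fun m _ => h1 m
      _ = (∏ m, ‖gramSchmidt ℝ b (cst (Fin.rev m))‖)⁻¹ := by
          rw [Finset.prod_inv_distrib]
      _ = D⁻¹ := by
          rw [hD]
          congr 1
          exact Equiv.prod_comp Fin.revPerm (fun m => ‖gramSchmidt ℝ b (cst m)‖)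
  have hg'k0 : ‖gramSchmidt ℝ b' k₀‖ = ‖gramSchmidt ℝ b i‖⁻¹ := by
    rw [gs_dual_norm hb hspan hpair k₀]
    congr 3
    apply Fin.ext
    show r - (r - (i : ℕ)) = (i : ℕ)
    omega
  set G : ℝ := ‖gramSchmidt ℝ b i‖ with hG
  have hGpos : 0 < G := hgnorm_pos i
  set X : ℝ := D ^ ((2 : ℝ)/j) with hX
  have hXpos : 0 < X := Real.rpow_pos_of_pos hDpos _
  have hBB : (G^2)⁻¹ ≤ hermiteC j * X⁻¹ := by
    have h1 : ‖gramSchmidt ℝ b' k₀‖^2 ≤ lambda1 q ^2 :=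
      pow_le_pow_left₀ (norm_nonneg _) hlam_q 2
    rw [hdetq, Real.inv_rpow hDpos.le] at hB
    rw [hg'k0, inv_pow] at h1
    exact h1.trans hB
  have hXle : X ≤ hermiteC j * G^2 := by
    have h4 : (G^2)⁻¹ * (X * G^2) ≤ (hermiteC j * X⁻¹) * (X * G^2) :=
      mul_le_mul_of_nonneg_right hBB (by positivity)
    have e1 : (G^2)⁻¹ * (X * G^2) = X := by field_simp
    have e2 : (hermiteC j * X⁻¹) * (X * G^2) = hermiteC j * G^2 := by
      field_simp
    rw [e1, e2] at h4
    exact h4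
  set bpre : Fin ((i : ℕ)+1) → E := fun m => b (cst m) with hbpre
  have hcst_inj : Function.Injective cst := fun a b h => Fin.ext (show (a:ℕ) = (b:ℕ) by exact congrArg (fun x : Fin (r+1) => x.val) h)
  have hbpre_li : LinearIndependent ℝ bpre := hb.comp cst hcst_inj
  have himg : ∀ m : Fin ((i : ℕ)+1), bpre '' Set.Iio m = b '' Set.Iio (cst m) := by
    intro m
    ext x
    constructor
    · rintro ⟨l, hl, rfl⟩
      refine ⟨cst l, ?_, rfl⟩
      rw [Set.mem_Iio, Fin.lt_def] at hl ⊢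
      exact hl
    · rintro ⟨t, ht, rfl⟩
      rw [Set.mem_Iio, Fin.lt_def] at ht
      have htm : (t : ℕ) < (m : ℕ) := ht
      refine ⟨⟨(t : ℕ), by have := m.isLt; omega⟩, ?_, ?_⟩
      · rw [Set.mem_Iio, Fin.lt_def]
        exact htm
      · rfl
  have hgs_pre : ∀ m, gramSchmidt ℝ bpre m = gramSchmidt ℝ b (cst m) := by
    intro m
    apply gs_unique
    · rw [himg m]
      exact gs_sub_mem b (cst m)
    · rintro u ⟨l, hl, rfl⟩
      apply gs_perp b (cst m)
      apply Submodule.subset_span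
      refine ⟨cst l, ?_, rfl⟩
      rw [Set.mem_Iio, Fin.lt_def] at hl ⊢
      exact hl
  have hdet_pre : latDet bpre = D := by
    rw [latDet_eq_prod bpre hbpre_li, hD]
    exact Finset.prod_congr rfl fun m _ => by rw [hgs_pre m]
  have hA := hermite_bound (show 0 < j by omega) bpre hbpre_li hγpos
  rw [hdet_pre] at hA
  have hsub : (latE bpre : Set E) ⊆ (latE b : Set E) := by
    have hle : latE bpre ≤ latE b := by
      rw [latE, AddSubgroup.closure_le]
      rintro _ ⟨m, rfl⟩
      exact AddSubgroup.subset_closure ⟨cst m, rfl⟩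
    exact hle
  have hbpre0 : bpre 0 ∈ latE bpre := AddSubgroup.subset_closure ⟨0, rfl⟩
  have hbpre0ne : bpre 0 ≠ 0 := hb.ne_zero (cst 0)
  have hlamA : lambda1 b ≤ lambda1 bpre := lambda1_le_lambda1 hsub hbpre0 hbpre0ne
  have hfinal : lambda1 b ^ 2 ≤ (hermiteC j * G)^2 := by
    calc lambda1 b ^2 ≤ lambda1 bpre ^2 := pow_le_pow_left₀ (lambda1_nonneg b) hlamA 2
      _ ≤ hermiteC j * X := hA
      _ ≤ hermiteC j * (hermiteC j * G^2) := mul_le_mul_of_nonneg_left hXle hγpos.le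
      _ = (hermiteC j * G)^2 := by ring
  have hle : lambda1 b ≤ hermiteC j * G :=
    le_of_pow_le_pow_left₀ two_ne_zero (by positivity) hfinal
  rw [div_le_iff₀ hγpos]
  show lambda1 b ≤ ‖gramSchmidt ℝ b i‖ * hermiteC j
  rw [← hG]
  linarith
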